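/- Let T be a topological space, X a metric space, H the space of nonempty compact subsets of X with the Hausdorff metric. If f : T → H is continuous, then the projection π₁ : Z_f → T, where Z_f = {(t, x) ∈ T × X : x ∈ f(t)}, is a proper map (i.e., closed with compact fibers). -/
import Mathlib


open TopologicalSpace Metric Filter Topology

theorem stmt9 (T : Type*) [TopologicalSpace T] (X : Type*) [MetricSpace X]
    (f : T → NonemptyCompacts X) (hf : Continuous f) :
    IsProperMap (fun z : {p : T × X // p.2 ∈ (f p.1 : Set X)} => z.1.1) := by
  rw [isProperMap_iff_ultrafilter]
  constructor
  · exact continuous_fst.comp continuous_subtype_val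
  · intro 𝒰 t ht
    -- the second coordinate filter
    set 𝒱 : Ultrafilter X := 𝒰.map (fun z => z.1.2)
    have h𝒱 : (𝒱 : Filter X) ≤ 𝓝ˢ (f t : Set X) := by
      intro s hs
      rcases (hasBasis_nhdsSet_thickening (f t).isCompact).mem_iff.mp hs with
        ⟨δ, hδ, hsub⟩
      refine Filter.mem_of_superset ?_ hsub
      have hball : {u : T | f u ∈ ball (f t) δ} ∈ 𝓝 t :=
        (hf.continuousAt).preimage_mem_nhds (ball_mem_nhds _ hδ)
      have h2 : {u : T | f u ∈ ball (f t) δ} ∈ Filter.map (fun z : {p : T × X // p.2 ∈ (f p.1 : Set X)} => z.1.1) 𝒰 := ht hball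
      rw [Filter.mem_map] at h2
      rw [Ultrafilter.coe_map, Filter.mem_map]
      filter_upwards [h2] with z hz
      have hd : dist (f z.1.1) (f t) < δ := hz
      rw [NonemptyCompacts.dist_eq] at hd
      have hfin : EMetric.hausdorffEdist (f z.1.1 : Set X) (f t) ≠ ⊤ :=
        edist_ne_top (f z.1.1) (f t)
      have := infDist_le_hausdorffDist_of_mem z.2 hfin
      exact (mem_thickening_iff_infDist_lt (f t).nonempty).mpr (lt_of_le_of_lt this hd)
    -- cluster point in f t
    have hne : (𝒱 : Filter X).NeBot := 𝒱.neBot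
    have hnd : ¬ Disjoint (𝓝ˢ (f t : Set X)) (𝒱 : Filter X) := by
      intro h
      exact hne.ne (disjoint_self.mp (h.mono_left h𝒱))
    obtain ⟨x, hx, hcl⟩ : ∃ x ∈ (f t : Set X), ¬ Disjoint (𝓝 x) (𝒱 : Filter X) := by
      by_contra h
      push_neg at h
      exact hnd (((f t).isCompact.disjoint_nhdsSet_left).mpr
        (fun x hx => h x hx))
    have hxlim : (𝒱 : Filter X) ≤ 𝓝 x :=
      Ultrafilter.clusterPt_iff.mp (clusterPt_iff_not_disjoint.mpr hcl)
    refine ⟨⟨(t, x), hx⟩, rfl, ?_⟩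
    rw [nhds_induced]
    rw [← Filter.map_le_iff_le_comap, nhds_prod_eq]
    exact Filter.le_prod.mpr ⟨ht, hxlim⟩
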